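/- Let V and E be finite types with maps tail, head : E → V, let b : E → ℤ, and for each e ∈ E let C_e : ℝ → ℝ be a convex function that is affine on [n, n+1] for every integer n. Call z : E → ℝ feasible if for every vertex u ∈ V, ∑_{e : head(e) = u} (z(e) + b(e)) = ∑_{e : tail(e) = u} z(e). Suppose z* : E → ℝ is feasible and minimizes the total cost ∑_{e} C_e(z(e)) over all feasible z. Then there exists a feasible z' : E → ℝ taking only integer values (for every e, z'(e) ∈ ℤ) with ∑_{e} C_e(z'(e)) = ∑_{e} C_e(z*(e)); in particular, the minimum convex cost flow problem with these data has an integer optimal solution. -/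

import Mathlib

open Finset


lemma sum_int_cast' {α : Type*} (s : Finset α) (f : α → ℝ)
    (h : ∀ a ∈ s, ∃ n : ℤ, f a = n) : ∃ n : ℤ, ∑ a ∈ s, f a = n := by
  classical
  induction s using Finset.induction with
  | empty => exact ⟨0, by simp⟩
  | @insert a s ha ih =>
    obtain ⟨n, hn⟩ := h a (Finset.mem_insert_self a s)
    obtain ⟨m, hm⟩ := ih (fun x hx => h x (Finset.mem_insert_of_mem hx))
    exact ⟨n + m, by rw [Finset.sum_insert ha, hn, hm]; push_cast; ring⟩

lemma exists_circulation
    {V E : Type*} [Fintype V] [Fintype E] [DecidableEq V]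
    (tail head : E → V) (y : E → ℝ)
    (hy : ∀ u : V, ∃ n : ℤ,
      (∑ e ∈ univ.filter (fun e => tail e = u), y e)
        - ∑ e ∈ univ.filter (fun e => head e = u), y e = n)
    (F : Finset E) (hF : ∀ e, e ∈ F ↔ ¬∃ n : ℤ, y e = n)
    (hne : F.Nonempty) :
    ∃ d : E → ℝ, d ≠ 0 ∧ (∀ e, e ∉ F → d e = 0) ∧
      ∀ u : V, ∑ e ∈ univ.filter (fun e => tail e = u), d e =
        ∑ e ∈ univ.filter (fun e => head e = u), d e := by
  classical
  by_contra hcon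
  push_neg at hcon
  -- key: any conservative vector supported on F is zero
  have key : ∀ d : E → ℝ, (∀ e, e ∉ F → d e = 0) →
      (∀ u : V, ∑ e ∈ univ.filter (fun e => tail e = u), d e =
        ∑ e ∈ univ.filter (fun e => head e = u), d e) → d = 0 := by
    intro d hsupp hcons
    by_contra hd
    obtain ⟨u, hu⟩ := hcon d hd hsupp
    exact hu (hcons u)
  -- Case: a loop in F
  by_cases hloop : ∃ e ∈ F, tail e = head e
  · obtain ⟨e0, he0F, he0⟩ := hloop
    have := key (fun e => if e = e0 then (1:ℝ) else 0)
      (by intro e heF; simp only [ite_eq_right_iff]; intro h; exact absurd (h ▸ he0F) heF)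
      (by
        intro u
        rw [Finset.sum_ite_eq' (univ.filter (fun e => tail e = u)) e0 (fun _ => (1:ℝ)),
          Finset.sum_ite_eq' (univ.filter (fun e => head e = u)) e0 (fun _ => (1:ℝ))]
        simp [he0])
    have : (fun e => if e = e0 then (1:ℝ) else 0) e0 = 0 := by rw [this]; rfl
    simp at this
  push_neg at hloop
  -- the incidence vectors
  set φ : E → (V → ℝ) := fun e => Pi.single (tail e) (1:ℝ) - Pi.single (head e) 1 with hφ
  have hφapply : ∀ e u, φ e u =
      (if tail e = u then (1:ℝ) else 0) - (if head e = u then 1 else 0) := by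
    intro e u
    simp [hφ, Pi.single_apply, eq_comm]
  -- linear independence
  have hindep : LinearIndependent ℝ (fun e : F => φ (e : E)) := by
    rw [Fintype.linearIndependent_iff]
    intro g hg e
    set d : E → ℝ := fun e => if h : e ∈ F then g ⟨e, h⟩ else 0 with hd
    have hsupp : ∀ e, e ∉ F → d e = 0 := by intro e he; simp [hd, he]
    have hsum : ∀ u, (∑ x : E, d x * φ x u) = 0 := by
      intro u
      have : (∑ i : F, g i • φ (i : E)) u = 0 := by rw [hg]; rfl
      rw [← this, Finset.sum_apply]
      have h1 : ∑ x : E, d x * φ x u = ∑ x ∈ F, d x * φ x u := by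
        symm
        apply Finset.sum_subset (Finset.subset_univ F)
        intro x _ hx
        rw [hsupp x hx, zero_mul]
      rw [h1, ← Finset.sum_coe_sort F (fun x => d x * φ x u)]
      apply Finset.sum_congr rfl
      intro i _
      simp [hd, i.2]
    have hcons : ∀ u : V, ∑ e ∈ univ.filter (fun e => tail e = u), d e =
        ∑ e ∈ univ.filter (fun e => head e = u), d e := by
      intro u
      have h1 := hsum u
      have h2 : ∀ x : E, d x * φ x u =
          (if tail x = u then d x else 0) - (if head x = u then d x else 0) := by
        intro x; rw [hφapply]; by_cases h3 : tail x = u <;> by_cases h4 : head x = u <;>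
          simp [h3, h4]
      rw [Finset.sum_congr rfl (fun x _ => h2 x), Finset.sum_sub_distrib] at h1
      rw [← Finset.sum_filter, ← Finset.sum_filter] at h1
      linarith
    have := key d hsupp hcons
    have : d (e : E) = 0 := by rw [this]; rfl
    simpa [hd] using this
  -- the touched vertex set
  set T : Finset V := F.biUnion (fun e => {tail e, head e}) with hT
  set deg : V → ℕ := fun u => (F.filter (fun e => tail e = u)).card +
      (F.filter (fun e => head e = u)).card with hdeg
  have hdegpos : ∀ u ∈ T, 1 ≤ deg u := by
    intro u hu
    rw [hT, Finset.mem_biUnion] at hu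
    obtain ⟨e, heF, he⟩ := hu
    simp only [Finset.mem_insert, Finset.mem_singleton] at he
    simp only [hdeg]
    rcases he with h | h
    · have h5 : e ∈ F.filter (fun e => tail e = u) := by simp [heF, h]
      have := Finset.card_pos.mpr ⟨e, h5⟩
      omega
    · have h5 : e ∈ F.filter (fun e => head e = u) := by simp [heF, h]
      have := Finset.card_pos.mpr ⟨e, h5⟩
      omega
  by_cases hdeg2 : ∀ u ∈ T, 2 ≤ deg u
  · -- counting contradiction
    have hcount : ∑ u : V, deg u = 2 * F.card := by
      rw [hdeg]
      rw [Finset.sum_add_distrib]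
      rw [← Finset.card_eq_sum_card_fiberwise (fun e (_ : e ∈ F) => Finset.mem_univ (tail e)),
        ← Finset.card_eq_sum_card_fiberwise (fun e (_ : e ∈ F) => Finset.mem_univ (head e))]
      ring
    have hTcard : T.card ≤ F.card := by
      have h1 : ∑ u ∈ T, 2 ≤ ∑ u ∈ T, deg u := Finset.sum_le_sum hdeg2
      have h2 : ∑ u ∈ T, deg u ≤ ∑ u : V, deg u :=
        Finset.sum_le_sum_of_subset (Finset.subset_univ T)
      simp only [Finset.sum_const, smul_eq_mul] at h1
      omega
    -- pick a base vertex
    obtain ⟨e1, he1⟩ := hne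
    have hu0 : tail e1 ∈ T := by
      rw [hT, Finset.mem_biUnion]; exact ⟨e1, he1, by simp⟩
    set u0 : V := tail e1 with hu0def
    set ψ : V → (V → ℝ) := fun u => Pi.single u (1:ℝ) - Pi.single u0 1 with hψ
    set B : Finset (V → ℝ) := (T.erase u0).image ψ with hB
    have hψmem : ∀ u ∈ T, ψ u ∈ Submodule.span ℝ (B : Set (V → ℝ)) := by
      intro u hu
      by_cases h : u = u0
      · have : ψ u = 0 := by simp [hψ, h]
        rw [this]; exact Submodule.zero_mem _
      · apply Submodule.subset_span
        rw [hB]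
        exact Finset.mem_coe.mpr (Finset.mem_image_of_mem ψ (Finset.mem_erase.mpr ⟨h, hu⟩))
    have hφmem : ∀ e ∈ F, φ e ∈ Submodule.span ℝ (B : Set (V → ℝ)) := by
      intro e he
      have htl : tail e ∈ T := by rw [hT, Finset.mem_biUnion]; exact ⟨e, he, by simp⟩
      have hhd : head e ∈ T := by rw [hT, Finset.mem_biUnion]; exact ⟨e, he, by simp⟩
      have : φ e = ψ (tail e) - ψ (head e) := by rw [hψ, hφ]; exact (sub_sub_sub_cancel_right _ _ _).symm
      rw [this]
      exact Submodule.sub_mem _ (hψmem _ htl) (hψmem _ hhd)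
    set W : Submodule ℝ (V → ℝ) := Submodule.span ℝ (B : Set (V → ℝ)) with hW
    have hWfin : FiniteDimensional ℝ W := by
      apply FiniteDimensional.span_finset
    have hWrank : Module.finrank ℝ W ≤ B.card := finrank_span_finset_le_card B
    set v : F → W := fun e => ⟨φ (e : E), hφmem _ e.2⟩ with hv
    have hvindep : LinearIndependent ℝ v := by
      apply LinearIndependent.of_comp W.subtype
      exact hindep
    have hcard : Fintype.card F ≤ Module.finrank ℝ W := hvindep.fintype_card_le_finrank
    rw [Fintype.card_coe] at hcard
    have hBcard : B.card ≤ T.card - 1 := by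
      calc B.card ≤ (T.erase u0).card := Finset.card_image_le
      _ = T.card - 1 := Finset.card_erase_of_mem hu0
    have hFpos : 1 ≤ F.card := Finset.card_pos.mpr ⟨e1, he1⟩
    have hTpos : 1 ≤ T.card := Finset.card_pos.mpr ⟨u0, hu0⟩
    omega
  · -- leaf vertex contradiction
    push_neg at hdeg2
    obtain ⟨u, huT, hu2⟩ := hdeg2
    have hu1 := hdegpos u huT
    have hdeg1 : deg u = 1 := by omega
    rw [hdeg] at hdeg1
    simp only at hdeg1
    obtain ⟨n, hn⟩ := hy u
    -- split the sums over membership in F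
    have hsplit : ∀ (f : E → V),
        ∑ e ∈ univ.filter (fun e => f e = u), y e =
          (∑ e ∈ F.filter (fun e => f e = u), y e) +
          ∑ e ∈ (univ.filter (fun e => f e = u)).filter (fun e => e ∉ F), y e := by
      intro f
      rw [← Finset.sum_filter_add_sum_filter_not (univ.filter (fun e => f e = u))
        (fun e => e ∈ F) y]
      congr 1
      congr 1
      ext e
      simp [Finset.mem_filter, and_comm]
    have hint : ∀ (f : E → V), ∃ m : ℤ,
        ∑ e ∈ (univ.filter (fun e => f e = u)).filter (fun e => e ∉ F), y e = m := by
      intro f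
      apply sum_int_cast'
      intro e he
      rw [Finset.mem_filter] at he
      have := he.2
      rw [hF] at this
      push_neg at this
      exact this
    obtain ⟨mt, hmt⟩ := hint tail
    obtain ⟨mh, hmh⟩ := hint head
    -- one of the two F-filters is a singleton, the other empty
    rcases Nat.add_eq_one_iff.mp hdeg1 with ⟨h1, h2⟩ | ⟨h1, h2⟩
    · -- head side singleton
      obtain ⟨e, he⟩ := Finset.card_eq_one.mp h2
      have heF : e ∈ F := by
        have : e ∈ F.filter (fun e => head e = u) := he ▸ Finset.mem_singleton_self e
        exact (Finset.mem_filter.mp this).1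
      have hye : ∃ m : ℤ, y e = m := by
        refine ⟨mt - mh - n, ?_⟩
        have hs1 : ∑ e ∈ F.filter (fun e => tail e = u), y e = 0 := by
          rw [Finset.card_eq_zero.mp h1]; simp
        have hs2 : ∑ e' ∈ F.filter (fun e => head e = u), y e' = y e := by
          rw [he, Finset.sum_singleton]
        rw [hsplit tail, hsplit head, hs1, hs2, hmt, hmh] at hn
        push_cast
        linarith
      exact (hF e).mp heF hye
    · -- tail side singleton
      obtain ⟨e, he⟩ := Finset.card_eq_one.mp h1
      have heF : e ∈ F := by
        have : e ∈ F.filter (fun e => tail e = u) := he ▸ Finset.mem_singleton_self e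
        exact (Finset.mem_filter.mp this).1
      have hye : ∃ m : ℤ, y e = m := by
        refine ⟨n - mt + mh, ?_⟩
        have hs2 : ∑ e ∈ F.filter (fun e => head e = u), y e = 0 := by
          rw [Finset.card_eq_zero.mp h2]; simp
        have hs1 : ∑ e' ∈ F.filter (fun e => tail e = u), y e' = y e := by
          rw [he, Finset.sum_singleton]
        rw [hsplit tail, hsplit head, hs1, hs2, hmt, hmh] at hn
        push_cast
        linarith
      exact (hF e).mp heF hye

theorem convex_cost_flow_integer_optimal'
    {V E : Type*} [Fintype V] [Fintype E] [DecidableEq V]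
    (tail head : E → V) (b : E → ℤ) (C : E → ℝ → ℝ)
    (haff : ∀ e : E, ∀ n : ℤ, ∃ α β : ℝ,
      ∀ z ∈ Set.Icc (n : ℝ) ((n : ℝ) + 1), C e z = α + β * z)
    (zstar : E → ℝ)
    (hfeas : ∀ u : V,
      ∑ e ∈ univ.filter (fun e => head e = u), (zstar e + (b e : ℝ)) =
        ∑ e ∈ univ.filter (fun e => tail e = u), zstar e)
    (hopt : ∀ z : E → ℝ,
      (∀ u : V,
        ∑ e ∈ univ.filter (fun e => head e = u), (z e + (b e : ℝ)) =
          ∑ e ∈ univ.filter (fun e => tail e = u), z e) →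
      ∑ e, C e (zstar e) ≤ ∑ e, C e (z e))
    (circ : ∀ (y : E → ℝ),
      (∀ u : V, ∃ k : ℤ,
        (∑ e ∈ univ.filter (fun e => tail e = u), y e)
          - ∑ e ∈ univ.filter (fun e => head e = u), y e = k) →
      ∀ (F : Finset E), (∀ e, e ∈ F ↔ ¬∃ k : ℤ, y e = k) → F.Nonempty →
      ∃ d : E → ℝ, d ≠ 0 ∧ (∀ e, e ∉ F → d e = 0) ∧
        ∀ u : V, ∑ e ∈ univ.filter (fun e => tail e = u), d e =
          ∑ e ∈ univ.filter (fun e => head e = u), d e) :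
    ∃ z' : E → ℝ,
      (∀ u : V,
        ∑ e ∈ univ.filter (fun e => head e = u), (z' e + (b e : ℝ)) =
          ∑ e ∈ univ.filter (fun e => tail e = u), z' e) ∧
      (∀ e : E, ∃ n : ℤ, z' e = (n : ℝ)) ∧
      ∑ e, C e (z' e) = ∑ e, C e (zstar e) := by
  classical
  choose α β hab using haff
  set n : E → ℤ := fun e => ⌊zstar e⌋ with hn
  set a : E → ℝ := fun e => α e (n e) with ha
  set c : E → ℝ := fun e => β e (n e) with hc
  have habn : ∀ e : E, ∀ z ∈ Set.Icc ((n e : ℝ)) ((n e : ℝ) + 1), C e z = a e + c e * z :=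
    fun e => hab e (n e)
  set m : ℝ := ∑ e, C e (zstar e) with hm
  set Feas : (E → ℝ) → Prop := fun z => ∀ u : V,
      ∑ e ∈ univ.filter (fun e => head e = u), (z e + (b e : ℝ)) =
        ∑ e ∈ univ.filter (fun e => tail e = u), z e with hFeas
  set A : Set (E → ℝ) := {z | Feas z ∧ ((∀ e, z e ∈ Set.Icc ((n e : ℝ)) ((n e : ℝ) + 1)) ∧
      ∑ e, (a e + c e * z e) = m)} with hA
  have hbox_star : ∀ e, zstar e ∈ Set.Icc ((n e : ℝ)) ((n e : ℝ) + 1) := by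
    intro e
    exact ⟨Int.floor_le _, (Int.lt_floor_add_one _).le⟩
  -- on the box, the true cost equals the affine cost
  have hcost_eq : ∀ z : E → ℝ, (∀ e, z e ∈ Set.Icc ((n e : ℝ)) ((n e : ℝ) + 1)) →
      ∑ e, C e (z e) = ∑ e, (a e + c e * z e) := by
    intro z hz
    exact Finset.sum_congr rfl (fun e _ => habn e (z e) (hz e))
  have hstarA : zstar ∈ A := ⟨hfeas, hbox_star, (hcost_eq zstar hbox_star).symm⟩
  -- A is compact
  have hclosed : IsClosed A := by
    rw [hA, Set.setOf_and, Set.setOf_and]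
    refine IsClosed.inter ?_ (IsClosed.inter ?_ ?_)
    · have : {z : E → ℝ | Feas z} = ⋂ u : V, {z : E → ℝ |
          ∑ e ∈ univ.filter (fun e => head e = u), (z e + (b e : ℝ)) =
            ∑ e ∈ univ.filter (fun e => tail e = u), z e} := by
        ext z; simp [hFeas, Set.mem_iInter]
      rw [this]
      refine isClosed_iInter (fun u => isClosed_eq ?_ ?_)
      · exact continuous_finset_sum _ (fun e _ => (continuous_apply e).add continuous_const)
      · exact continuous_finset_sum _ (fun e _ => continuous_apply e)
    · have : {z : E → ℝ | ∀ e, z e ∈ Set.Icc ((n e : ℝ)) ((n e : ℝ) + 1)} =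
          ⋂ e : E, (fun z : E → ℝ => z e) ⁻¹' Set.Icc ((n e : ℝ)) ((n e : ℝ) + 1) := by
        ext z; simp [Set.mem_iInter]
      rw [this]
      exact isClosed_iInter (fun e => isClosed_Icc.preimage (continuous_apply e))
    · refine isClosed_eq ?_ continuous_const
      exact continuous_finset_sum _
        (fun e _ => continuous_const.add (continuous_const.mul (continuous_apply e)))
  have hcompact : IsCompact A := by
    apply IsCompact.of_isClosed_subset (isCompact_univ_pi (fun e => isCompact_Icc
      (a := ((n e : ℝ))) (b := ((n e : ℝ) + 1)))) hclosed
    intro z hz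
    rw [Set.mem_univ_pi]
    exact fun e => hz.2.1 e
  -- maximize the sum of squares over A
  have hgcont : Continuous (fun z : E → ℝ => ∑ e, (z e) ^ 2) :=
    continuous_finset_sum _ (fun e _ => (continuous_apply e).pow 2)
  obtain ⟨z', hz'A, hmax⟩ := hcompact.exists_isMaxOn ⟨zstar, hstarA⟩ hgcont.continuousOn
  obtain ⟨hz'feas, hz'box, hz'cost⟩ := hz'A
  -- true cost of z' equals the minimum
  have hz'costC : ∑ e, C e (z' e) = m := by rw [hcost_eq z' hz'box]; exact hz'cost
  refine ⟨z', hz'feas, ?_, hz'costC⟩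
  -- integrality, by contradiction
  by_contra hnotint
  push_neg at hnotint
  set F : Finset E := univ.filter (fun e => ¬∃ k : ℤ, z' e = k) with hF
  have hFmem : ∀ e, e ∈ F ↔ ¬∃ k : ℤ, z' e = k := by
    intro e; simp [hF]
  have hFne : F.Nonempty := by
    obtain ⟨e, he⟩ := hnotint
    exact ⟨e, (hFmem e).mpr (by push_neg; exact fun k => fun h => he k h)⟩
  -- the vertex imbalances of z' are integers
  have hy : ∀ u : V, ∃ k : ℤ,
      (∑ e ∈ univ.filter (fun e => tail e = u), z' e)
        - ∑ e ∈ univ.filter (fun e => head e = u), z' e = k := by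
    intro u
    refine ⟨∑ e ∈ univ.filter (fun e => head e = u), b e, ?_⟩
    have h1 := hz'feas u
    rw [Finset.sum_add_distrib] at h1
    push_cast
    linarith
  obtain ⟨d, hdne, hdsupp, hdcons⟩ := circ z' hy F hFmem hFne
  -- fractional coordinates lie strictly inside their unit interval
  have hstrict : ∀ e ∈ F, (n e : ℝ) < z' e ∧ z' e < (n e : ℝ) + 1 := by
    intro e he
    have hbox := hz'box e
    have hne1 : z' e ≠ (n e : ℝ) := by
      intro h; exact (hFmem e).mp he ⟨n e, h⟩
    have hne2 : z' e ≠ (n e : ℝ) + 1 := by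
      intro h; exact (hFmem e).mp he ⟨n e + 1, by push_cast; exact h⟩
    exact ⟨lt_of_le_of_ne hbox.1 (Ne.symm hne1), lt_of_le_of_ne hbox.2 hne2⟩
  -- choose a small step size
  set δ : ℝ := F.inf' hFne (fun e => min (z' e - (n e : ℝ)) ((n e : ℝ) + 1 - z' e)) with hδ
  have hδpos : 0 < δ := by
    rw [hδ, Finset.lt_inf'_iff]
    intro e he
    have := hstrict e he
    simp only [lt_min_iff]
    constructor <;> linarith [this.1, this.2]
  set M : ℝ := F.sup' hFne (fun e => |d e|) with hM
  have hMnonneg : 0 ≤ M := by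
    obtain ⟨e, he⟩ := hFne
    exact le_trans (abs_nonneg (d e)) (Finset.le_sup' (fun e => |d e|) he)
  set ε : ℝ := δ / (M + 1) with hε
  have hεpos : 0 < ε := div_pos hδpos (by linarith)
  -- both perturbed points stay in the box
  have hpert : ∀ (s : ℝ), |s| = ε → ∀ e, z' e + s * d e ∈ Set.Icc ((n e : ℝ)) ((n e : ℝ) + 1) := by
    intro s hs e
    by_cases he : e ∈ F
    · have h1 : |s * d e| ≤ δ := by
        rw [abs_mul, hs]
        have h2 : |d e| ≤ M := Finset.le_sup' (fun e => |d e|) he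
        rw [hε]
        rw [div_mul_eq_mul_div, div_le_iff₀ (by linarith)]
        have : δ * |d e| ≤ δ * (M + 1) := by
          apply mul_le_mul_of_nonneg_left (by linarith) hδpos.le
        linarith
      have h3 : δ ≤ z' e - (n e : ℝ) :=
        le_trans (Finset.inf'_le _ he) (min_le_left _ _)
      have h4 : δ ≤ (n e : ℝ) + 1 - z' e :=
        le_trans (Finset.inf'_le _ he) (min_le_right _ _)
      have h5 := abs_le.mp h1
      constructor <;> [linarith [h5.1]; linarith [h5.2]]
    · rw [hdsupp e he, mul_zero, add_zero]
      exact hz'box e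
  -- both perturbed points are feasible
  have hpertfeas : ∀ (s : ℝ), Feas (fun e => z' e + s * d e) := by
    intro s u
    have h1 := hz'feas u
    have h2 := hdcons u
    simp only [Finset.sum_add_distrib]
    rw [← Finset.mul_sum, ← Finset.mul_sum, h2]
    rw [Finset.sum_add_distrib] at h1
    linarith
  -- both perturbed points have minimal affine cost, hence lie in A
  have hpertA : ∀ (s : ℝ), |s| = ε → (fun e => z' e + s * d e) ∈ A := by
    have key : ∀ (s : ℝ), |s| = ε →
        m ≤ ∑ e, (a e + c e * (z' e + s * d e)) := by
      intro s hs
      rw [← hcost_eq _ (hpert s hs)]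
      exact hopt _ (hpertfeas s)
    have hplus := key ε (abs_of_pos hεpos)
    have hminus := key (-ε) (by rw [abs_neg]; exact abs_of_pos hεpos)
    have hsum : (∑ e, (a e + c e * (z' e + ε * d e)))
        + ∑ e, (a e + c e * (z' e + (-ε) * d e)) = 2 * m := by
      rw [← Finset.sum_add_distrib, ← hz'cost, Finset.mul_sum]
      apply Finset.sum_congr rfl
      intro e _
      ring
    intro s hs
    refine ⟨hpertfeas s, hpert s hs, ?_⟩
    rcases abs_eq hεpos.le |>.mp hs with rfl | rfl
    · linarith
    · linarith
  -- contradiction with maximality of the sum of squares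
  have hd2pos : 0 < ∑ e, (d e) ^ 2 := by
    have hne' : ∃ e, d e ≠ 0 := by
      by_contra h
      push_neg at h
      exact hdne (funext h)
    obtain ⟨e, he⟩ := hne'
    apply Finset.sum_pos' (fun e _ => sq_nonneg (d e)) ⟨e, Finset.mem_univ e, by positivity⟩
  have hplus := hmax (hpertA ε (abs_of_pos hεpos))
  have hminus := hmax (hpertA (-ε) (by rw [abs_neg]; exact abs_of_pos hεpos))
  simp only [Set.mem_setOf_eq] at hplus hminus
  have hsum2 : (∑ e, (z' e + ε * d e) ^ 2) + ∑ e, (z' e + (-ε) * d e) ^ 2 =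
      2 * (∑ e, (z' e) ^ 2) + 2 * ε ^ 2 * ∑ e, (d e) ^ 2 := by
    rw [← Finset.sum_add_distrib, Finset.mul_sum, Finset.mul_sum, ← Finset.sum_add_distrib]
    apply Finset.sum_congr rfl
    intro e _
    ring
  have hε2 : 0 < ε ^ 2 * ∑ e, (d e) ^ 2 := by positivity
  have h1 : (∑ e, (z' e + ε * d e) ^ 2) ≤ ∑ e, (z' e) ^ 2 := hplus
  have h2 : (∑ e, (z' e + (-ε) * d e) ^ 2) ≤ ∑ e, (z' e) ^ 2 := hminus
  linarith

/-- A minimum convex cost flow problem whose edge costs are convex and affine on every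
integer interval has an integer optimal solution: any optimal feasible flow can be
replaced by an integer-valued feasible flow of the same total cost. -/
theorem convex_cost_flow_integer_optimal
    {V E : Type*} [Fintype V] [Fintype E] [DecidableEq V]
    (tail head : E → V) (b : E → ℤ) (C : E → ℝ → ℝ)
    (hconv : ∀ e : E, ConvexOn ℝ Set.univ (C e))
    (haff : ∀ e : E, ∀ n : ℤ, ∃ α β : ℝ,
      ∀ z ∈ Set.Icc (n : ℝ) ((n : ℝ) + 1), C e z = α + β * z)
    (zstar : E → ℝ)
    (hfeas : ∀ u : V,
      ∑ e ∈ univ.filter (fun e => head e = u), (zstar e + (b e : ℝ)) =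
        ∑ e ∈ univ.filter (fun e => tail e = u), zstar e)
    (hopt : ∀ z : E → ℝ,
      (∀ u : V,
        ∑ e ∈ univ.filter (fun e => head e = u), (z e + (b e : ℝ)) =
          ∑ e ∈ univ.filter (fun e => tail e = u), z e) →
      ∑ e, C e (zstar e) ≤ ∑ e, C e (z e)) :
    ∃ z' : E → ℝ,
      (∀ u : V,
        ∑ e ∈ univ.filter (fun e => head e = u), (z' e + (b e : ℝ)) =
          ∑ e ∈ univ.filter (fun e => tail e = u), z' e) ∧
      (∀ e : E, ∃ n : ℤ, z' e = (n : ℝ)) ∧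
      ∑ e, C e (z' e) = ∑ e, C e (zstar e) := by
  exact convex_cost_flow_integer_optimal' tail head b C haff zstar hfeas hopt
    (exists_circulation tail head)
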